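/- Let J be a nonempty proper subset of {0,…,d}. Then the image {ρ'(z)(δ_0) : z ∈ A_J} of A_J applied to δ_0 is exactly span_K{δ_μ : Σ_k μ(k) = 0, J(μ) ⊆ J, and {k : μ(k) < 0} ∩ J = ∅}. -/

import Mathlib

open UniversalEnvelopingAlgebra

attribute [local instance] LieRing.ofAssociativeRing

/-- For J a nonempty proper subset of {0,…,d}, the image of A_J
applied to δ_0 is exactly span_K{δ_μ : Σμ = 0, J(μ) ⊆ J, {k : μ(k) < 0} ∩ J = ∅}. -/
theorem stmt_11 (K : Type) [Field K] [CharZero K] (d : ℕ) (hd : 1 ≤ d)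
    (ρ' : UniversalEnvelopingAlgebra K (Matrix (Fin (d+1)) (Fin (d+1)) K) →ₐ[K]
        Module.End K ((Fin (d+1) → ℤ) →₀ K))
    (hρ'₁ : ∀ (i j : Fin (d+1)), i ≠ j → ∀ ν : Fin (d+1) → ℤ,
      ρ' (ι K (Matrix.single i j (1:K))) (Finsupp.single ν (1:K)) =
        (ν j - 1) • Finsupp.single (ν + Pi.single i 1 - Pi.single j 1) (1:K))
    (hρ'₂ : ∀ (k : Fin (d+1)) (ν : Fin (d+1) → ℤ),
      ρ' (ι K (Matrix.single k k (1:K))) (Finsupp.single ν (1:K)) =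
        ν k • Finsupp.single ν (1:K))
    (J : Set (Fin (d+1))) (hJ : J.Nonempty) (hJ' : J ≠ Set.univ)
    (AJ : Subalgebra K (UniversalEnvelopingAlgebra K (Matrix (Fin (d+1)) (Fin (d+1)) K)))
    (hAJ : AJ = Algebra.adjoin K
      {w | ∃ i ∈ J, ∃ j ∉ J, w = ι K (Matrix.single i j (1:K))}) :
    (fun z => ρ' z (Finsupp.single (0 : Fin (d+1) → ℤ) (1:K))) '' (AJ : Set _) =
      ↑(Submodule.span K {w : (Fin (d+1) → ℤ) →₀ K | ∃ μ : Fin (d+1) → ℤ,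
          (∑ k, μ k) = 0 ∧ {k | 0 < μ k} ⊆ J ∧ {k | μ k < 0} ∩ J = ∅ ∧
          w = Finsupp.single μ (1:K)}) := by
  classical
  set δ0 : (Fin (d+1) → ℤ) →₀ K := Finsupp.single (0 : Fin (d+1) → ℤ) (1:K) with hδ0
  set Sgen : Set ((Fin (d+1) → ℤ) →₀ K) := {w | ∃ μ : Fin (d+1) → ℤ,
          (∑ k, μ k) = 0 ∧ {k | 0 < μ k} ⊆ J ∧ {k | μ k < 0} ∩ J = ∅ ∧
          w = Finsupp.single μ (1:K)} with hSgen
  set sp := Submodule.span K Sgen with hsp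
  have hnegpt : ∀ μ : Fin (d+1) → ℤ, ({k | μ k < 0} ∩ J = ∅) ↔ (∀ k, μ k < 0 → k ∉ J) := by
    intro μ
    rw [Set.eq_empty_iff_forall_notMem]
    constructor
    · intro h k hk hkJ; exact h k ⟨hk, hkJ⟩
    · rintro h k ⟨hk, hkJ⟩; exact h k hk hkJ
  -- stability of the generator set
  have hstab : ∀ i ∈ J, ∀ j ∉ J, ∀ μ : Fin (d+1) → ℤ,
      (∑ k, μ k) = 0 → {k | 0 < μ k} ⊆ J → {k | μ k < 0} ∩ J = ∅ →
      (∑ k, (μ + Pi.single i 1 - Pi.single j 1 : Fin (d+1) → ℤ) k) = 0 ∧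
      {k | 0 < (μ + Pi.single i 1 - Pi.single j 1 : Fin (d+1) → ℤ) k} ⊆ J ∧
      {k | (μ + Pi.single i 1 - Pi.single j 1 : Fin (d+1) → ℤ) k < 0} ∩ J = ∅ := by
    intro i hi j hj μ hsum hpos hneg
    have hneg' := (hnegpt μ).mp hneg
    have hij : i ≠ j := fun h => hj (h ▸ hi)
    have hval : ∀ k, (μ + Pi.single i 1 - Pi.single j 1 : Fin (d+1) → ℤ) k
        = μ k + (if k = i then 1 else 0) - (if k = j then 1 else 0) := by
      intro k; simp [Pi.single_apply]
    refine ⟨?_, ?_, ?_⟩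
    · rw [Finset.sum_congr rfl (fun k _ => hval k)]
      rw [Finset.sum_sub_distrib, Finset.sum_add_distrib]
      simp [hsum]
    · intro k hk
      rw [Set.mem_setOf_eq, hval k] at hk
      by_cases hki : k = i
      · exact hki ▸ hi
      · by_cases hkj : k = j
        · subst hkj
          simp [hij.symm, hki] at hk
          exact absurd (hpos (show k ∈ {k | 0 < μ k} from by exact lt_trans one_pos hk)) hj
        · simp [hki, hkj] at hk
          exact hpos hk
    · rw [hnegpt]
      intro k hk hkJ
      rw [hval k] at hk
      by_cases hki : k = i
      · subst hki
        simp [hij] at hk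
        have hk' : μ k < 0 := by omega
        exact hneg' k hk' hi
      · by_cases hkj : k = j
        · exact hj (hkj ▸ hkJ)
        · simp [hki, hkj] at hk
          exact hneg' k hk hkJ
  -- invariance of the span under A_J
  have hinv : ∀ z ∈ AJ, ∀ w ∈ sp, ρ' z w ∈ sp := by
    rw [hAJ]
    intro z hz
    induction hz using Algebra.adjoin_induction with
    | mem x hx =>
      obtain ⟨i, hi, j, hj, rfl⟩ := hx
      intro w hw
      induction hw using Submodule.span_induction with
      | mem w hw =>
        obtain ⟨μ, hsum, hpos, hneg, rfl⟩ := hw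
        have hij : i ≠ j := fun h => hj (h ▸ hi)
        rw [hρ'₁ i j hij μ, ← Int.cast_smul_eq_zsmul K]
        exact Submodule.smul_mem _ _ (Submodule.subset_span
          ⟨μ + Pi.single i 1 - Pi.single j 1, (hstab i hi j hj μ hsum hpos hneg).1,
            (hstab i hi j hj μ hsum hpos hneg).2.1, (hstab i hi j hj μ hsum hpos hneg).2.2, rfl⟩)
      | zero => simp
      | add u v _ _ hu hv => rw [map_add]; exact Submodule.add_mem _ hu hv
      | smul c u _ hu => rw [map_smul]; exact Submodule.smul_mem _ _ hu
    | algebraMap r =>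
      intro w hw
      rw [AlgHom.commutes, Module.algebraMap_end_apply]
      exact Submodule.smul_mem _ _ hw
    | add x y hx hy ihx ihy =>
      intro w hw
      rw [map_add, LinearMap.add_apply]
      exact Submodule.add_mem _ (ihx w hw) (ihy w hw)
    | mul x y hx hy ihx ihy =>
      intro w hw
      rw [map_mul, Module.End.mul_apply]
      exact ihx _ (ihy w hw)
  -- surjectivity: every generator is hit
  have hsurj : ∀ n : ℕ, ∀ μ : Fin (d+1) → ℤ, (∑ k, (μ k).toNat) = n →
      (∑ k, μ k) = 0 → {k | 0 < μ k} ⊆ J → {k | μ k < 0} ∩ J = ∅ →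
      ∃ z ∈ AJ, ρ' z δ0 = Finsupp.single μ (1:K) := by
    intro n
    induction n using Nat.strong_induction_on with
    | _ n ih =>
      intro μ hn hsum hpos hneg
      have hneg' := (hnegpt μ).mp hneg
      by_cases hzero : ∀ k, μ k = 0
      · have hμ0 : μ = 0 := funext hzero
        subst hμ0
        exact ⟨1, Subalgebra.one_mem _, by simp [hδ0]⟩
      · push_neg at hzero
        have hexpos : ∃ i, 0 < μ i := by
          by_contra h
          push_neg at h
          have := (Finset.sum_eq_zero_iff_of_nonpos (fun k _ => h k)).mp hsum
          obtain ⟨k0, hk0⟩ := hzero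
          exact hk0 (this k0 (Finset.mem_univ k0))
        obtain ⟨i, hiμ⟩ := hexpos
        have hexneg : ∃ j, μ j < 0 := by
          by_contra h
          push_neg at h
          have := (Finset.sum_eq_zero_iff_of_nonneg (fun k _ => h k)).mp hsum
          exact absurd (this i (Finset.mem_univ i)) (by omega)
        obtain ⟨j, hjμ⟩ := hexneg
        have hi : i ∈ J := hpos hiμ
        have hj : j ∉ J := hneg' j hjμ
        have hij : i ≠ j := fun h => by rw [h] at hiμ; omega
        set μ' : Fin (d+1) → ℤ := μ - Pi.single i 1 + Pi.single j 1 with hμ'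
        have hval : ∀ k, μ' k
            = μ k - (if k = i then 1 else 0) + (if k = j then 1 else 0) := by
          intro k; simp [hμ', Pi.single_apply]
        have hμ'i : μ' i = μ i - 1 := by rw [hval]; simp [hij]
        have hμ'j : μ' j = μ j + 1 := by rw [hval]; simp [hij.symm]
        have hμ'k : ∀ k, k ≠ i → k ≠ j → μ' k = μ k := by
          intro k h1 h2; rw [hval]; simp [h1, h2]
        have hlt : (∑ k, (μ' k).toNat) < n := by
          rw [← hn]
          refine Finset.sum_lt_sum (fun k _ => ?_) ⟨i, Finset.mem_univ i, ?_⟩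
          · by_cases h1 : k = i
            · subst h1; omega
            · by_cases h2 : k = j
              · subst h2; omega
              · rw [hμ'k k h1 h2]
          · omega
        have hsum' : (∑ k, μ' k) = 0 := by
          rw [Finset.sum_congr rfl (fun k _ => hval k)]
          rw [Finset.sum_add_distrib, Finset.sum_sub_distrib]
          simp [hsum]
        have hpos' : {k | 0 < μ' k} ⊆ J := by
          intro k hk
          rw [Set.mem_setOf_eq] at hk
          by_cases h1 : k = i
          · exact h1 ▸ hi
          · by_cases h2 : k = j
            · subst h2; omega
            · rw [hμ'k k h1 h2] at hk; exact hpos hk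
        have hneg'' : {k | μ' k < 0} ∩ J = ∅ := by
          rw [hnegpt]
          intro k hk hkJ
          by_cases h1 : k = i
          · subst h1
            rw [hμ'i] at hk
            exact hneg' k (by omega) hi
          · by_cases h2 : k = j
            · exact hj (h2 ▸ hkJ)
            · rw [hμ'k k h1 h2] at hk; exact hneg' k hk hkJ
        obtain ⟨z', hz', hz'eq⟩ := ih _ hlt μ' rfl hsum' hpos' hneg''
        have hgen : ι K (Matrix.single i j (1:K)) ∈ AJ := by
          rw [hAJ]
          exact Algebra.subset_adjoin ⟨i, hi, j, hj, rfl⟩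
        refine ⟨((μ j : K)⁻¹) • (ι K (Matrix.single i j (1:K)) * z'),
          Subalgebra.smul_mem _ (Subalgebra.mul_mem _ hgen hz') _, ?_⟩
        have hrec : μ' + Pi.single i 1 - Pi.single j 1 = μ := by
          funext k
          have := hval k
          simp only [Pi.sub_apply, Pi.add_apply, Pi.single_apply] at this ⊢
          omega
        rw [map_smul, LinearMap.smul_apply, map_mul, Module.End.mul_apply, hz'eq,
          hρ'₁ i j hij μ', hrec, hμ'j]
        rw [← Int.cast_smul_eq_zsmul K]
        rw [smul_smul]
        have hne : (μ j : K) ≠ 0 := Int.cast_ne_zero.mpr (by omega)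
        have : (μ j + 1 - 1 : ℤ) = μ j := by ring
        rw [this, inv_mul_cancel₀ hne, one_smul]
  -- put things together
  let L : UniversalEnvelopingAlgebra K (Matrix (Fin (d+1)) (Fin (d+1)) K) →ₗ[K]
      ((Fin (d+1) → ℤ) →₀ K) :=
    { toFun := fun z => ρ' z δ0
      map_add' := fun x y => by simp
      map_smul' := fun c x => by simp }
  have hset : (fun z => ρ' z δ0) '' (AJ : Set _) = ↑(Submodule.map L AJ.toSubmodule) := by
    rw [Submodule.map_coe]; rfl
  have heq : Submodule.map L (Subalgebra.toSubmodule AJ) = sp := by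
    apply le_antisymm
    · rw [Submodule.map_le_iff_le_comap]
      intro z hz
      exact hinv z hz δ0 (Submodule.subset_span ⟨0, by simp, by simp, by simp, by simp [hδ0]⟩)
    · rw [Submodule.span_le]
      rintro w ⟨μ, h1, h2, h3, rfl⟩
      obtain ⟨z, hz, hzeq⟩ := hsurj _ μ rfl h1 h2 h3
      exact ⟨z, hz, hzeq⟩
  rw [hset, heq]
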